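/- Let I be a negative definite symmetric real m×m matrix whose off-diagonal entries are all nonnegative. Then for every vector n with all entries strictly positive, the vector N defined by N·I = -n (i.e., N = -n·I⁻¹) has all entries strictly positive. -/

import Mathlib

open Matrix

/-- If `I` is a negative definite symmetric real matrix with nonnegative
off-diagonal entries, then for any vector `n` with strictly positive entries,
the vector `N = -n ᵥ* I⁻¹` (so that `N ᵥ* I = -n`) has strictly positive
entries. -/
theorem posSolution_of_negDef_offDiag_nonneg {m : ℕ}
    (I : Matrix (Fin m) (Fin m) ℝ) (hsymm : I.IsSymm) (hneg : (-I).PosDef)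
    (hoff : ∀ i j, i ≠ j → 0 ≤ I i j)
    (n : Fin m → ℝ) (hn : ∀ i, 0 < n i) :
    ∀ i, 0 < (-(n ᵥ* I⁻¹)) i := by
  set M : Matrix (Fin m) (Fin m) ℝ := -I with hMdef
  have hIdet : IsUnit I.det := by
    have h1 : M.det ≠ 0 := hneg.det_pos.ne'
    have h2 : M.det = (-1) ^ m * I.det := by
      rw [hMdef, Matrix.det_neg]; simp
    rw [h2] at h1
    exact (IsUnit.mk0 _ (fun h => h1 (by rw [h, mul_zero])))
  set x : Fin m → ℝ := -(n ᵥ* I⁻¹) with hxdef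
  have hxM : x ᵥ* M = n := by
    rw [hxdef, hMdef, Matrix.neg_vecMul, Matrix.vecMul_neg, neg_neg,
      Matrix.vecMul_vecMul, Matrix.nonsing_inv_mul I hIdet, Matrix.vecMul_one]
  have hs : Mᵀ = M := by rw [hMdef]; simpa [Matrix.IsSymm] using hsymm
  have hMx : M *ᵥ x = n := by
    rw [← hxM]; nth_rewrite 1 [← hs]; rw [Matrix.mulVec_transpose]
  have hMoff : ∀ i j, i ≠ j → M i j ≤ 0 := fun i j hij => by
    simpa [hMdef] using hoff i j hij
  set u : Fin m → ℝ := fun i => max (x i) 0 with hu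
  set v : Fin m → ℝ := fun i => max (-(x i)) 0 with hv
  have hx_uv : ∀ i, x i = u i - v i := fun i => by
    rw [hu, hv]
    rcases le_total (x i) 0 with h | h
    · simp [max_eq_right h, max_eq_left (neg_nonneg.mpr h)]
    · simp [max_eq_left h, max_eq_right (neg_nonpos.mpr h)]
  have huv0 : ∀ i, u i * v i = 0 := fun i => by
    rcases le_total (x i) 0 with h | h
    · simp [hu, max_eq_right h]
    · simp [hv, max_eq_right (neg_nonpos.mpr h)]
  have hu0 : ∀ i, 0 ≤ u i := fun i => le_max_right _ _
  have hv0 : ∀ i, 0 ≤ v i := fun i => le_max_right _ _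
  have h1 : v ⬝ᵥ (M *ᵥ u) ≤ 0 := by
    rw [dotProduct]
    apply Finset.sum_nonpos
    intro i _
    rw [mulVec, dotProduct, Finset.mul_sum]
    apply Finset.sum_nonpos
    intro j _
    rcases eq_or_ne i j with rfl | hij
    · rcases mul_eq_zero.mp (huv0 i) with h | h <;> simp [h]
    · exact mul_nonpos_of_nonneg_of_nonpos (hv0 i)
        (mul_nonpos_of_nonpos_of_nonneg (hMoff i j hij) (hu0 j))
  have h2 : 0 ≤ v ⬝ᵥ n :=
    Finset.sum_nonneg fun i _ => mul_nonneg (hv0 i) (hn i).le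
  have hMuv : M *ᵥ x = M *ᵥ u - M *ᵥ v := by
    have hxe : x = u - v := funext fun i => by simpa using hx_uv i
    rw [hxe, Matrix.mulVec_sub]
  have h3 : v ⬝ᵥ (M *ᵥ v) ≤ 0 := by
    have h4 : v ⬝ᵥ (M *ᵥ x) = v ⬝ᵥ (M *ᵥ u) - v ⬝ᵥ (M *ᵥ v) := by
      rw [hMuv, dotProduct_sub]
    rw [hMx] at h4
    linarith
  have hveq0 : v = 0 := by
    by_contra hv0'
    have h5 := hneg.dotProduct_mulVec_pos hv0'
    simp only [star_trivial] at h5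
    linarith
  have hxnn : ∀ i, 0 ≤ x i := fun i => by
    have h6 : v i = 0 := congrFun hveq0 i
    have h := hx_uv i
    rw [h6] at h
    rw [h]
    simpa using hu0 i
  intro i
  show 0 < x i
  have hdiag : 0 < M i i := by
    have hne : (Pi.single i 1 : Fin m → ℝ) ≠ 0 := by
      intro h
      have := congrFun h i
      simp at this
    have h := hneg.dotProduct_mulVec_pos hne
    simp only [star_trivial] at h
    have heq : (Pi.single i 1 : Fin m → ℝ) ⬝ᵥ (M *ᵥ Pi.single i 1) = M i i := by
      simp [dotProduct, mulVec, Pi.single_apply]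
    rwa [heq] at h
  have hsum : n i = ∑ j, x j * M j i := by
    rw [← hxM]; rfl
  have hsplit : ∑ j, x j * M j i = x i * M i i + ∑ j ∈ Finset.univ.erase i, x j * M j i :=
    (Finset.add_sum_erase _ _ (Finset.mem_univ i)).symm
  have hrest : ∑ j ∈ Finset.univ.erase i, x j * M j i ≤ 0 :=
    Finset.sum_nonpos fun j hj =>
      mul_nonpos_of_nonneg_of_nonpos (hxnn j) (hMoff j i (Finset.ne_of_mem_erase hj))
  have hle : n i ≤ x i * M i i := by rw [hsum, hsplit]; linarith
  nlinarith [hn i, hdiag, hxnn i]
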